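/- Let a, b, c ∈ ℝ with a > b > 0, c > 0 and 2 < a/b < (c/(2b))² + 2. Then Δ > 0, the real roots of f₁ are exactly 0, z₁ = c/(2b) − √Δ and z₂ = c/(2b) + √Δ, these roots are pairwise distinct and satisfy 0 < z₁ < z₂, and the roots 0 and z₂ are of saddle type: β₂(0)β₃(0) = (a − b)(2b − a) < 0 and β₂(z₂)β₃(z₂) < 0. -/

import Mathlib

noncomputable section

/-- `Δ = (c/(2b))² − a/b + 2`. -/
def disc (a b c : ℝ) : ℝ := (c / (2 * b)) ^ 2 - a / b + 2

/-- The cubic `f₁(z) = b z³ − c z² + (a − 2b) z`. -/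
def cubicF (a b c z : ℝ) : ℝ := b * z ^ 3 - c * z ^ 2 + (a - 2 * b) * z

/-- `β₂(z) = 2b z² − c z + (a − b)`. -/
def beta2 (a b c z : ℝ) : ℝ := 2 * b * z ^ 2 - c * z + (a - b)

/-- `β₃(z) = −3b z² + 2c z + (2b − a)`. -/
def beta3 (a b c z : ℝ) : ℝ := -3 * b * z ^ 2 + 2 * c * z + (2 * b - a)

theorem stmt4 (a b c : ℝ) (hba : b < a) (hb : 0 < b) (hc : 0 < c)
    (h1 : 2 < a / b) (h2 : a / b < (c / (2 * b)) ^ 2 + 2) :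
    0 < disc a b c ∧
    ({z : ℝ | cubicF a b c z = 0} =
      {0, c / (2 * b) - Real.sqrt (disc a b c), c / (2 * b) + Real.sqrt (disc a b c)}) ∧
    (c / (2 * b) - Real.sqrt (disc a b c) ≠ 0 ∧
      c / (2 * b) + Real.sqrt (disc a b c) ≠ 0 ∧
      c / (2 * b) - Real.sqrt (disc a b c) ≠ c / (2 * b) + Real.sqrt (disc a b c)) ∧
    (0 < c / (2 * b) - Real.sqrt (disc a b c) ∧
      c / (2 * b) - Real.sqrt (disc a b c) < c / (2 * b) + Real.sqrt (disc a b c)) ∧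
    beta2 a b c 0 * beta3 a b c 0 = (a - b) * (2 * b - a) ∧
    (a - b) * (2 * b - a) < 0 ∧
    beta2 a b c (c / (2 * b) + Real.sqrt (disc a b c)) *
      beta3 a b c (c / (2 * b) + Real.sqrt (disc a b c)) < 0 := by
  have hb0 : b ≠ 0 := ne_of_gt hb
  set m : ℝ := c / (2 * b) with hm
  have hm0 : 0 < m := div_pos hc (by linarith)
  have hΔ : 0 < disc a b c := by unfold disc; linarith
  set s : ℝ := Real.sqrt (disc a b c) with hsdef
  have hs0 : 0 < s := Real.sqrt_pos.2 hΔ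
  have hs2 : s ^ 2 = disc a b c := Real.sq_sqrt hΔ.le
  have hs2' : 4 * b ^ 2 * s ^ 2 = c ^ 2 - 4 * a * b + 8 * b ^ 2 := by
    have h := hs2
    unfold disc at h
    field_simp at h
    nlinarith [h]
  have hΔm : disc a b c = m ^ 2 - a / b + 2 := rfl
  have hsm : s < m := by
    nlinarith [hs2, hΔm, h1, hm0, hs0]
  have e2 : 2 * b * m = c := by rw [hm]; field_simp
  have hfac : ∀ z, cubicF a b c z = b * z * (z - (m - s)) * (z - (m + s)) := by
    intro z
    unfold cubicF
    rw [hm]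
    field_simp
    linear_combination z * hs2'
  have hz1 : 0 < m - s := by linarith
  have hz2 : 0 < m + s := by linarith
  have h2b : 2 * b < a := by
    rw [lt_div_iff₀ hb] at h1; linarith
  refine ⟨hΔ, ?_, ⟨hz1.ne', hz2.ne', by intro h; nlinarith⟩, ⟨hz1, by linarith⟩, ?_, ?_, ?_⟩
  · ext z
    simp only [Set.mem_setOf_eq, hfac z, Set.mem_insert_iff, Set.mem_singleton_iff,
      mul_eq_zero, sub_eq_zero, hb0, false_or, or_assoc]
  · unfold beta2 beta3; ring
  · exact mul_neg_of_pos_of_neg (by linarith) (by linarith)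
  · have hq : b * (m + s) ^ 2 - c * (m + s) + (a - 2 * b) = 0 := by
      have h0 : cubicF a b c (m + s) = 0 := by rw [hfac]; ring
      unfold cubicF at h0
      have h1' : (m + s) * (b * (m + s) ^ 2 - c * (m + s) + (a - 2 * b)) = 0 := by
        linear_combination h0
      rcases mul_eq_zero.1 h1' with h | h
      · exact absurd h hz2.ne'
      · exact h
    have hb2 : beta2 a b c (m + s) = b * ((m + s) ^ 2 + 1) := by
      unfold beta2; rw [hm]; field_simp
      linear_combination hs2'
    have hb3 : beta3 a b c (m + s) = -2 * b * s * (m + s) := by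
      unfold beta3; rw [hm]; field_simp
      linear_combination (-1 : ℝ) * hs2'
    rw [hb2, hb3]
    have hp : 0 < b * ((m + s) ^ 2 + 1) := by positivity
    have hn : -2 * b * s * (m + s) < 0 := by nlinarith
    exact mul_neg_of_pos_of_neg hp hn
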